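/- For every (b,d) ∈ P, i.e. 0 < b < d, there exists an integer H₁ ≥ 3 (depending only on (b,d)) such that for every integer h ≥ H₁ there exists N₁ ∈ ℕ (depending on (b,d) and h) such that for all integers N ≥ N₁ there exists an integer k with 1 ≤ k ≤ N−1 and F( cos(2πk/N), T_h(cos(2πk/N)), b, d ) < 0. Consequently the coexistence equilibrium of the mean-field survival model is linearly unstable to wave-like perturbations in the k-th discrete Fourier mode. -/

import Mathlib

open Real

noncomputable def F (x y b d : ℝ) : ℝ :=
  -b*d*x^2 + (b*d^2*y - b*(b+d) - d*(b+1)*(b+2*d))*x + b*d*(b+d)*y + (b+1)*(b+d)*(b+2*d)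

noncomputable def cheb (h : ℕ) (x : ℝ) : ℝ := (Polynomial.Chebyshev.T ℝ h).eval x

lemma F_one_neg (b d : ℝ) (hb : 0 < b) (hbd : b < d) : F 1 (-1) b d < 0 := by
  have h1 : 0 < b * ((b + 2*d) * (d - b)) :=
    mul_pos hb (mul_pos (by linarith) (by linarith))
  unfold F; nlinarith [h1]

lemma F_cont1 (b d : ℝ) : Continuous (fun x : ℝ => F x (-1) b d) := by
  unfold F; fun_prop

lemma Psi_cont (b d : ℝ) (h : ℕ) :
    Continuous (fun θ : ℝ => F (cos θ) (cos (h * θ)) b d) := by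
  unfold F; fun_prop

theorem discrete_bifurcation_instability (b d : ℝ) (hb : 0 < b) (hbd : b < d) :
    ∃ H₁ : ℕ, 3 ≤ H₁ ∧ ∀ h : ℕ, H₁ ≤ h →
      ∃ N₁ : ℕ, ∀ N : ℕ, N₁ ≤ N →
        ∃ k : ℕ, 1 ≤ k ∧ k ≤ N - 1 ∧
          F (cos (2*π*k/N)) (cheb h (cos (2*π*k/N))) b d < 0 := by
  have hF1 : F 1 (-1) b d < 0 := F_one_neg b d hb hbd
  have h0 : Filter.Tendsto (fun h : ℕ => π / h) Filter.atTop (nhds 0) :=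
    tendsto_const_div_atTop_nhds_zero_nat π
  have hcos : Filter.Tendsto (fun h : ℕ => cos (π / h)) Filter.atTop (nhds 1) := by
    have := (Real.continuous_cos.tendsto 0).comp h0
    simpa [Function.comp_def] using this
  have ht : Filter.Tendsto (fun h : ℕ => F (cos (π / h)) (-1) b d) Filter.atTop
      (nhds (F 1 (-1) b d)) := ((F_cont1 b d).tendsto 1).comp hcos
  have hev : ∀ᶠ h : ℕ in Filter.atTop, F (cos (π / h)) (-1) b d < 0 :=
    ht.eventually (eventually_lt_nhds hF1)
  obtain ⟨H₀, hH₀⟩ := Filter.eventually_atTop.mp hev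
  refine ⟨max H₀ 3, le_max_right _ _, fun h hh => ?_⟩
  have hh3 : 3 ≤ h := le_trans (le_max_right _ _) hh
  have hhpos : (0:ℝ) < (h:ℝ) := by exact_mod_cast Nat.lt_of_lt_of_le (by norm_num) hh3
  have hhne : (h:ℝ) ≠ 0 := ne_of_gt hhpos
  -- Ψ at π/h is negative
  have hΨ0 : F (cos (π / h)) (cos (h * (π / h))) b d < 0 := by
    have : (h:ℝ) * (π / h) = π := by field_simp
    rw [this, Real.cos_pi]
    exact hH₀ h (le_trans (le_max_left _ _) hh)
  -- open set and δ
  have hop : IsOpen {θ : ℝ | F (cos θ) (cos (h * θ)) b d < 0} :=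
    isOpen_lt (Psi_cont b d h) continuous_const
  obtain ⟨δ, hδ, hball⟩ := Metric.isOpen_iff.mp hop (π / h) hΨ0
  refine ⟨max (⌈2*π/δ⌉₊ + 1) 3, fun N hN => ?_⟩
  have hN3 : 3 ≤ N := le_trans (le_max_right _ _) hN
  have hNpos : (0:ℝ) < (N:ℝ) := by exact_mod_cast Nat.lt_of_lt_of_le (by norm_num) hN3
  have hNδ : 2*π/(N:ℝ) < δ := by
    have h1 : (⌈2*π/δ⌉₊ + 1 : ℕ) ≤ N := le_trans (le_max_left _ _) hN
    have h2 : 2*π/δ < (N:ℝ) := by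
      calc 2*π/δ ≤ (⌈2*π/δ⌉₊ : ℝ) := Nat.le_ceil _
        _ < ((⌈2*π/δ⌉₊ + 1 : ℕ) : ℝ) := by exact_mod_cast Nat.lt_succ_self _
        _ ≤ (N:ℝ) := by exact_mod_cast h1
    rw [div_lt_iff₀ hNpos]
    rw [div_lt_iff₀ hδ] at h2
    nlinarith
  set q : ℕ := N / (2*h) with hq
  refine ⟨q + 1, le_add_self, ?_, ?_⟩
  · -- q + 1 ≤ N - 1
    have h6 : q ≤ N / 6 := by
      apply Nat.div_le_div_left (by omega) (by norm_num)
    have := Nat.div_le_div_right (c := 6) (le_refl N)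
    omega
  · -- the analytic estimate
    have hmod := Nat.div_add_mod N (2*h)
    set r : ℕ := N % (2*h) with hr
    have hrlt : r < 2*h := Nat.mod_lt _ (by omega)
    have hNr : (N:ℝ) = 2*(h:ℝ)*(q:ℝ) + (r:ℝ) := by exact_mod_cast (hmod.symm)
    have hrR : (r:ℝ) < 2*(h:ℝ) := by exact_mod_cast hrlt
    have hr0 : (0:ℝ) ≤ (r:ℝ) := Nat.cast_nonneg r
    set θ : ℝ := 2*π*((q:ℕ)+1 : ℕ)/N with hθ
    have hkcast : (((q:ℕ)+1 : ℕ):ℝ) = (q:ℝ) + 1 := by push_cast; ring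
    have hdiff : θ - π/h = π*(2*(h:ℝ) - (r:ℝ))/((h:ℝ)*(N:ℝ)) := by
      rw [hθ, hkcast]
      have hNne : (N:ℝ) ≠ 0 := ne_of_gt hNpos
      rw [div_sub_div _ _ hNne hhne, div_eq_div_iff (by positivity) (by positivity)]
      linear_combination (-(π*(h:ℝ)*(N:ℝ))) * hNr
    have hpos : 0 < θ - π/h := by
      have h2 : 0 < 2*(h:ℝ) - (r:ℝ) := by linarith
      rw [hdiff]; positivity
    have hub : θ - π/h ≤ 2*π/N := by
      rw [hdiff, div_le_div_iff₀ (by positivity) hNpos]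
      have hπ : 0 < π := Real.pi_pos
      nlinarith [mul_nonneg (mul_nonneg hπ.le hNpos.le) hr0]
    have hmem : θ ∈ Metric.ball (π/h) δ := by
      rw [Metric.mem_ball, Real.dist_eq, abs_of_pos hpos]
      linarith
    have hFneg := hball hmem
    have hcheb : cheb h (cos θ) = cos ((h:ℝ) * θ) := by
      unfold cheb
      have := Polynomial.Chebyshev.T_real_cos θ (h:ℤ)
      rw [this]; push_cast; ring_nf
    rw [hcheb]
    exact hFneg
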